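/- Let Ω ⊆ ℂⁿ be a bounded open set, let α ∈ (0,1] and C₀ ≥ 0, and let f : Ω → ℂ be holomorphic on Ω with |f(z) − f(ζ)| ≤ C₀·‖z − ζ‖^α for all z, ζ ∈ Ω. Then for every integer k ≥ 1 there is a constant C (depending only on n, k, α, C₀) such that for all z ∈ Ω, ‖iteratedFDeriv ℂ k f z‖ ≤ C · d(z)^{α − k}, where d(z) = infDist(z, Ωᶜ) is the Euclidean distance from z to the complement of Ω. (Hardy–Littlewood-type estimate: a holomorphic function Lipschitz of order α has k-th derivatives blowing up no faster than d^{α−k}.) -/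

import Mathlib

open Set Metric Real intervalIntegral

variable {F : Type} [NormedAddCommGroup F] [NormedSpace ℂ F] [CompleteSpace F]

/-- 1-D Cauchy estimate for the derivative at the center of a disc. -/
lemma cauchy_deriv_norm_le (ψ : ℂ → F) (R M : ℝ) (hR : 0 < R)
    (hd : DifferentiableOn ℂ ψ (closedBall 0 R))
    (hM : ∀ w ∈ closedBall (0:ℂ) R, ‖ψ w‖ ≤ M) : ‖deriv ψ 0‖ ≤ M / R := by
  have hM0 : 0 ≤ M := le_trans (norm_nonneg _) (hM 0 (mem_closedBall_self hR.le))
  lift R to NNReal using hR.le with R' hR'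
  have hR0 : 0 < R' := by exact_mod_cast hR
  have hp := hd.hasFPowerSeriesOnBall hR0
  have h1 : deriv ψ 0 = cauchyPowerSeries ψ 0 R' 1 fun _ => 1 := hp.hasFPowerSeriesAt.deriv
  rw [h1]
  calc ‖cauchyPowerSeries ψ 0 R' 1 fun _ => 1‖
      ≤ ‖cauchyPowerSeries ψ 0 R' 1‖ * ∏ _i : Fin 1, ‖(1:ℂ)‖ :=
        (cauchyPowerSeries ψ 0 R' 1).le_opNorm _
    _ = ‖cauchyPowerSeries ψ 0 R' 1‖ := by simp
    _ ≤ ((2 * π)⁻¹ * ∫ θ : ℝ in (0)..2 * π, ‖ψ (circleMap 0 R' θ)‖) * |(R' : ℝ)|⁻¹ ^ 1 :=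
        norm_cauchyPowerSeries_le ψ 0 R' 1
    _ ≤ ((2 * π)⁻¹ * (2 * π * M)) * |(R' : ℝ)|⁻¹ ^ 1 := by
        have hI : (∫ θ : ℝ in (0)..2 * π, ‖ψ (circleMap 0 R' θ)‖) ≤ 2 * π * M := by
          have := intervalIntegral.integral_mono_on (a := (0:ℝ)) (b := 2*π)
            Real.two_pi_pos.le
            (((hd.continuousOn.comp_continuous (continuous_circleMap 0 R')
              fun θ => circleMap_mem_closedBall 0 hR.le θ).norm).intervalIntegrable _ _)
            (_root_.intervalIntegrable_const (μ := MeasureTheory.volume) (c := M))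
            (fun θ _ => hM _ (circleMap_mem_closedBall 0 hR.le θ))
          simpa using this
        have h2 : (0:ℝ) ≤ (2 * π)⁻¹ := by positivity
        have h3 : (0:ℝ) ≤ |(R' : ℝ)|⁻¹ ^ 1 := by positivity
        exact mul_le_mul_of_nonneg_right (mul_le_mul_of_nonneg_left hI h2) h3
    _ = M / R' := by
        rw [abs_of_nonneg hR.le]
        have h2π : (2 * π) ≠ 0 := by positivity
        field_simp

/-- Representation of the derivative at the center as a circle average. -/
lemma deriv_eq_circle_average (ψ : ℂ → F) (R : ℝ) (hR : 0 < R)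
    (hd : DifferentiableOn ℂ ψ (closedBall 0 R)) :
    deriv ψ 0 = (2 * (π:ℂ))⁻¹ •
      ∫ θ in (0:ℝ)..2 * π, (circleMap 0 R θ)⁻¹ • ψ (circleMap 0 R θ) := by
  lift R to NNReal using hR.le with R' hR'
  have hR0 : 0 < R' := by exact_mod_cast hR
  have hp := hd.hasFPowerSeriesOnBall hR0
  have h1 : deriv ψ 0 = cauchyPowerSeries ψ 0 R' 1 fun _ => 1 := hp.hasFPowerSeriesAt.deriv
  rw [h1, cauchyPowerSeries_apply]
  rw [circleIntegral]
  have hne : ∀ θ : ℝ, circleMap 0 R' θ ≠ 0 := fun θ => circleMap_ne_center hR.ne'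
  have : ∀ θ : ℝ, deriv (circleMap 0 (R':ℝ)) θ •
      ((1 / (circleMap 0 (R':ℝ) θ - 0)) ^ 1 • (circleMap 0 (R':ℝ) θ - 0)⁻¹ •
        ψ (circleMap 0 (R':ℝ) θ))
      = Complex.I • ((circleMap 0 (R':ℝ) θ)⁻¹ • ψ (circleMap 0 (R':ℝ) θ)) := by
    intro θ
    rw [deriv_circleMap]
    simp only [sub_zero, pow_one, smul_smul, one_div]
    congr 1
    field_simp [hne θ]
  rw [intervalIntegral.integral_congr (fun θ _ => this θ), intervalIntegral.integral_smul,
    smul_smul]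
  congr 1
  have hπ : (π : ℂ) ≠ 0 := by exact_mod_cast Real.pi_ne_zero
  field_simp [Complex.I_ne_zero]

variable {𝔼 : Type*} [NormedAddCommGroup 𝔼] [NormedSpace ℂ 𝔼]

/-- If `g` is ℂ-differentiable and bounded by `M` on `ball y ρ`, then `‖fderiv ℂ g y‖ ≤ 2M/ρ`. -/
lemma norm_fderiv_le_of_bounded (g : 𝔼 → F) (y : 𝔼) (ρ M : ℝ) (hρ : 0 < ρ)
    (hg : DifferentiableOn ℂ g (ball y ρ)) (hM : ∀ w ∈ ball y ρ, ‖g w‖ ≤ M) :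
    ‖fderiv ℂ g y‖ ≤ 2 * M / ρ := by
  have hM0 : 0 ≤ M := le_trans (norm_nonneg _) (hM y (mem_ball_self hρ))
  refine ContinuousLinearMap.opNorm_le_bound _ (by positivity) fun v => ?_
  rcases eq_or_ne v 0 with rfl | hv
  · simp
  have hv0 : 0 < ‖v‖ := norm_pos_iff.mpr hv
  set R : ℝ := ρ / (2 * ‖v‖) with hRdef
  have hRpos : 0 < R := by positivity
  set ψ : ℂ → F := fun t => g (y + t • v) with hψdef
  have hmap : ∀ t : ℂ, t ∈ closedBall (0:ℂ) R → y + t • v ∈ ball y ρ := by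
    intro t ht
    rw [mem_closedBall, dist_zero_right] at ht
    rw [mem_ball, dist_self_add_left, norm_smul]
    calc ‖t‖ * ‖v‖ ≤ R * ‖v‖ := by gcongr
      _ = ρ / 2 := by rw [hRdef]; field_simp
      _ < ρ := by linarith
  have hψd : DifferentiableOn ℂ ψ (closedBall 0 R) := by
    apply hg.comp _ hmap
    exact (differentiable_id.smul_const v).const_add y |>.differentiableOn
  have hgy : DifferentiableAt ℂ g y := hg.differentiableAt (isOpen_ball.mem_nhds (mem_ball_self hρ))
  have hline : HasDerivAt (fun t : ℂ => y + t • v) v 0 := by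
    simpa using ((hasDerivAt_id (0:ℂ)).smul_const v).const_add y
  have hψderiv : HasDerivAt ψ (fderiv ℂ g y v) 0 := by
    have h0 : HasFDerivAt g (fderiv ℂ g y) (y + (0:ℂ) • v) := by simpa using hgy.hasFDerivAt
    have := h0.comp_hasDerivAt 0 hline
    simpa [hψdef, Function.comp_def] using this
  have hbd := cauchy_deriv_norm_le ψ R M hRpos hψd fun w hw => hM _ (hmap w hw)
  rw [hψderiv.deriv] at hbd
  calc ‖fderiv ℂ g y v‖ ≤ M / R := hbd
    _ = 2 * M / ρ * ‖v‖ := by rw [hRdef]; field_simp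

variable {n : ℕ}

local notation "𝔸" => EuclideanSpace ℂ (Fin n)

lemma norm_circleMap_zero' (r : ℝ) (θ : ℝ) : ‖circleMap 0 r θ‖ = |r| := by
  simp [circleMap]

/-- Key regularity step: the `j`-th coordinate derivative of a holomorphic function on an
open set in `ℂⁿ` is again holomorphic. -/
lemma coordDeriv_differentiableOn {F : Type} [NormedAddCommGroup F] [NormedSpace ℂ F]
    [FiniteDimensional ℂ F] {U : Set 𝔸} (hU : IsOpen U) {g : 𝔸 → F}
    (hg : DifferentiableOn ℂ g U) (j : Fin n) :
    DifferentiableOn ℂ (fun z => fderiv ℂ g z (EuclideanSpace.single j 1)) U := by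
  borelize 𝔸
  intro z₀ hz₀
  refine DifferentiableAt.differentiableWithinAt ?_
  obtain ⟨ε, hε, hballU⟩ := Metric.isOpen_iff.1 hU z₀ hz₀
  set r : ℝ := ε / 8 with hrdef
  have hr : 0 < r := by positivity
  have hsub : closedBall z₀ (4 * r) ⊆ U := by
    refine subset_trans (fun w hw => ?_) hballU
    rw [mem_closedBall] at hw
    rw [mem_ball]
    have h4 : 4 * r = ε / 2 := by rw [hrdef]; ring
    rw [h4] at hw; linarith
  set e : 𝔸 := EuclideanSpace.single j (1:ℂ) with hedef
  have he : ‖e‖ = 1 := by rw [hedef, EuclideanSpace.norm_single]; norm_num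
  obtain ⟨M, hMb⟩ := (isCompact_closedBall z₀ (4*r)).exists_bound_of_continuousOn
    (hg.continuousOn.mono hsub)
  have hM0 : 0 ≤ M := le_trans (norm_nonneg _)
    (hMb z₀ (mem_closedBall_self (by positivity)))
  have hcne : ∀ θ : ℝ, circleMap 0 r θ ≠ 0 := fun θ => circleMap_ne_center hr.ne'
  have hcnorm : ∀ θ : ℝ, ‖circleMap 0 r θ‖ = r := fun θ => by
    rw [norm_circleMap_zero', abs_of_pos hr]
  -- membership helper
  have hmem : ∀ ρ : ℝ, ∀ z ∈ ball z₀ ρ, ∀ θ : ℝ, z + circleMap 0 r θ • e ∈ ball z₀ (ρ + r) := by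
    intro ρ z hz θ
    rw [mem_ball] at hz ⊢
    calc dist (z + circleMap 0 r θ • e) z₀ ≤ dist (z + circleMap 0 r θ • e) z + dist z z₀ :=
          dist_triangle _ _ _
      _ < r + ρ := by
          refine add_lt_add_of_le_of_lt ?_ hz
          rw [dist_self_add_left, norm_smul, he, mul_one, hcnorm]
      _ = ρ + r := by ring
  have hmemU : ∀ z ∈ ball z₀ (2*r), ∀ θ : ℝ, z + circleMap 0 r θ • e ∈ U := by
    intro z hz θ
    refine hsub (ball_subset_closedBall ?_)
    have := hmem (2*r) z hz θ
    refine ball_subset_ball (by linarith) this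
  -- the parametric integrand and its z-derivative
  set G : 𝔸 → ℝ → F := fun z θ => (circleMap 0 r θ)⁻¹ • g (z + circleMap 0 r θ • e) with hGdef
  set G' : 𝔸 → ℝ → 𝔸 →L[ℂ] F :=
    fun z θ => (circleMap 0 r θ)⁻¹ • fderiv ℂ g (z + circleMap 0 r θ • e) with hG'def
  have hlinecont : ∀ z : 𝔸, Continuous fun θ : ℝ => z + circleMap 0 r θ • e :=
    fun z => continuous_const.add ((continuous_circleMap 0 r).smul continuous_const)
  have hGcont : ∀ z ∈ ball z₀ (2*r), Continuous (G z) := by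
    intro z hz
    refine Continuous.smul ((continuous_circleMap 0 r).inv₀ hcne) ?_
    exact hg.continuousOn.comp_continuous (hlinecont z) (hmemU z hz)
  set μ : MeasureTheory.Measure ℝ := MeasureTheory.volume.restrict (Ioc (0:ℝ) (2*π)) with hμdef
  -- representation of the coordinate derivative as a circle average
  have hrep : ∀ z ∈ ball z₀ (2*r),
      fderiv ℂ g z e = (2*(π:ℂ))⁻¹ • ∫ θ, G z θ ∂μ := by
    intro z hz
    set ψ : ℂ → F := fun t => g (z + t • e) with hψdef
    have hmapψ : ∀ t : ℂ, t ∈ closedBall (0:ℂ) r → z + t • e ∈ U := by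
      intro t ht
      rw [mem_closedBall, dist_zero_right] at ht
      refine hsub (mem_closedBall.2 ?_)
      calc dist (z + t • e) z₀ ≤ dist (z + t • e) z + dist z z₀ := dist_triangle _ _ _
        _ ≤ r + 2*r := by
            refine add_le_add ?_ (le_of_lt (mem_ball.1 hz))
            rw [dist_self_add_left, norm_smul, he, mul_one]; exact ht
        _ ≤ 4 * r := by linarith
    have hψd : DifferentiableOn ℂ ψ (closedBall 0 r) := by
      apply hg.comp _ hmapψ
      exact ((differentiable_id.smul_const e).const_add z).differentiableOn
    have hgz : DifferentiableAt ℂ g z := hg.differentiableAt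
      (hU.mem_nhds (hsub (ball_subset_closedBall (ball_subset_ball (by linarith) hz))))
    have hline : HasDerivAt (fun t : ℂ => z + t • e) e 0 := by
      simpa using ((hasDerivAt_id (0:ℂ)).smul_const e).const_add z
    have h0 : HasFDerivAt g (fderiv ℂ g z) (z + (0:ℂ) • e) := by simpa using hgz.hasFDerivAt
    have hψderiv : HasDerivAt ψ (fderiv ℂ g z e) 0 := by
      have := h0.comp_hasDerivAt 0 hline
      simpa [hψdef, Function.comp_def] using this
    have := deriv_eq_circle_average ψ r hr hψd
    rw [hψderiv.deriv] at this
    rw [this, hμdef, ← intervalIntegral.integral_of_le Real.two_pi_pos.le]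
  -- differentiate under the integral sign
  have hbd : ∀ θ : ℝ, ∀ z ∈ ball z₀ r, ‖G' z θ‖ ≤ r⁻¹ * (2 * M / (2*r)) := by
    intro θ z hz
    have hy : z + circleMap 0 r θ • e ∈ ball z₀ (2*r) := by
      have := hmem r z hz θ
      refine ball_subset_ball (by linarith) this
    have hball2 : ball (z + circleMap 0 r θ • e) (2*r) ⊆ closedBall z₀ (4*r) := by
      intro w hw
      rw [mem_ball] at hw hy
      rw [mem_closedBall]
      calc dist w z₀ ≤ dist w (z + circleMap 0 r θ • e) + dist (z + circleMap 0 r θ • e) z₀ :=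
            dist_triangle _ _ _
        _ ≤ 2*r + 2*r := by push_cast; exact add_le_add hw.le hy.le
        _ = 4 * r := by ring
    have hfd := norm_fderiv_le_of_bounded g (z + circleMap 0 r θ • e) (2*r) M (by linarith)
      (hg.mono (hball2.trans hsub)) (fun w hw => hMb w (hball2 hw))
    rw [hG'def]
    have hns : ‖(circleMap 0 r θ)⁻¹ • fderiv ℂ g (z + circleMap 0 r θ • e)‖
        = r⁻¹ * ‖fderiv ℂ g (z + circleMap 0 r θ • e)‖ := by
      rw [norm_smul ((circleMap 0 r θ)⁻¹) (fderiv ℂ g (z + circleMap 0 r θ • e)),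
        norm_inv, hcnorm]
    rw [hns]
    exact mul_le_mul_of_nonneg_left hfd (by positivity)
  have hdiff : ∀ θ : ℝ, ∀ z ∈ ball z₀ r, HasFDerivAt (fun z => G z θ) (G' z θ) z := by
    intro θ z hz
    have hyU : z + circleMap 0 r θ • e ∈ U :=
      hmemU z (ball_subset_ball (by linarith) hz) θ
    have hgy : DifferentiableAt ℂ g (z + circleMap 0 r θ • e) :=
      hg.differentiableAt (hU.mem_nhds hyU)
    have htrans : HasFDerivAt (fun w : 𝔸 => w + circleMap 0 r θ • e)
        (ContinuousLinearMap.id ℂ 𝔸) z := (hasFDerivAt_id z).add_const _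
    have := (hgy.hasFDerivAt.comp z htrans).fun_const_smul ((circleMap 0 r θ)⁻¹)
    simpa [hGdef, hG'def, ContinuousLinearMap.comp_id, Function.comp_def] using this
  have key : HasFDerivAt (fun z => ∫ θ, G z θ ∂μ)
      (∫ θ, G' z₀ θ ∂μ) z₀ := by
    refine hasFDerivAt_integral_of_dominated_of_fderiv_le (𝕜 := ℂ) (F := G) (F' := G')
      (bound := fun _ => r⁻¹ * (2 * M / (2*r))) (ball_mem_nhds z₀ hr) ?_ ?_ ?_ ?_ ?_ ?_
    · filter_upwards [isOpen_ball.mem_nhds (mem_ball_self (by positivity : (0:ℝ) < 2*r))]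
        with z hz
      exact (hGcont z hz).aestronglyMeasurable
    · have : MeasureTheory.IntegrableOn (G z₀) (Ioc (0:ℝ) (2*π)) MeasureTheory.volume :=
        ((hGcont z₀ (mem_ball_self (by positivity))).integrableOn_Icc).mono_set
          Ioc_subset_Icc_self
      exact this
    · refine MeasureTheory.AEStronglyMeasurable.fun_smul ?_ ?_
      · exact ((continuous_circleMap 0 r).inv₀ hcne).aestronglyMeasurable
      · exact ((measurable_fderiv ℂ g).comp (hlinecont z₀).measurable).aestronglyMeasurable
    · exact MeasureTheory.ae_of_all _ fun θ z hz => hbd θ z hz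
    · rw [hμdef]
      exact MeasureTheory.integrableOn_const measure_Ioc_lt_top.ne
    · exact MeasureTheory.ae_of_all _ fun θ z hz => hdiff θ z hz
  have hfinal : DifferentiableAt ℂ
      (fun z => (2*(π:ℂ))⁻¹ • ∫ θ, G z θ ∂μ) z₀ :=
    key.differentiableAt.const_smul _
  refine hfinal.congr_of_eventuallyEq ?_
  exact Filter.eventuallyEq_of_mem
    (isOpen_ball.mem_nhds (mem_ball_self (by positivity : (0:ℝ) < 2*r))) hrep

/-- A differentiable function on an open subset of `ℂⁿ` is `C^m` for every `m`. -/
lemma contDiffOn_of_differentiableOn_cplx :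
    ∀ (m : ℕ) (F : Type) [NormedAddCommGroup F] [NormedSpace ℂ F] [FiniteDimensional ℂ F]
    (U : Set 𝔸) (_hU : IsOpen U) (g : 𝔸 → F) (_hg : DifferentiableOn ℂ g U),
    ContDiffOn ℂ m g U := by
  intro m
  induction m with
  | zero => intro F _ _ _ U hU g hg; exact contDiffOn_zero.2 hg.continuousOn
  | succ m ih =>
    intro F _ _ _ U hU g hg
    have hfd : DifferentiableOn ℂ (fderiv ℂ g) U := by
      have hcoord : ∀ j : Fin n,
          DifferentiableOn ℂ (fun z => fderiv ℂ g z (EuclideanSpace.single j 1)) U :=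
        fun j => coordDeriv_differentiableOn hU hg j
      have hdiff : DifferentiableOn ℂ (fun z => ∑ j : Fin n,
          (EuclideanSpace.proj j : 𝔸 →L[ℂ] ℂ).smulRight
            (fderiv ℂ g z (EuclideanSpace.single j 1))) U := by
        apply DifferentiableOn.fun_sum
        intro j _
        have hL : Differentiable ℂ (fun w : F =>
            (EuclideanSpace.proj j : 𝔸 →L[ℂ] ℂ).smulRight w) :=
          (ContinuousLinearMap.smulRightL ℂ 𝔸 F (EuclideanSpace.proj j)).differentiable
        exact hL.comp_differentiableOn (hcoord j)
      refine hdiff.congr fun z hz => ?_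
      apply ContinuousLinearMap.ext
      intro v
      have hv : ∑ j : Fin n, v j • EuclideanSpace.single j (1:ℂ) = v := by
        have := (EuclideanSpace.basisFun (Fin n) ℂ).sum_repr v
        simpa [EuclideanSpace.basisFun_apply, EuclideanSpace.basisFun_repr] using this
      calc fderiv ℂ g z v = fderiv ℂ g z (∑ j : Fin n, v j • EuclideanSpace.single j (1:ℂ)) := by
            rw [hv]
        _ = ∑ j : Fin n, v j • fderiv ℂ g z (EuclideanSpace.single j (1:ℂ)) := by
            rw [map_sum]
            simp
        _ = (∑ j : Fin n, (EuclideanSpace.proj j : 𝔸 →L[ℂ] ℂ).smulRight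
              (fderiv ℂ g z (EuclideanSpace.single j 1))) v := by
            rw [ContinuousLinearMap.sum_apply]
            simp [ContinuousLinearMap.smulRight_apply]
    rw [show ((m + 1 : ℕ) : WithTop ℕ∞) = (m : ℕ) + 1 by push_cast; ring,
      contDiffOn_succ_iff_fderiv_of_isOpen hU]
    exact ⟨hg, by simp, ih _ _ hU _ hfd⟩

/-- Iterated Cauchy estimates on shrinking balls. -/
lemma iterated_cauchy_bound (k : ℕ) (hk : 0 < k) {c : 𝔸} {r M : ℝ} (hr : 0 < r) {f : 𝔸 → ℂ}
    (hf : DifferentiableOn ℂ f (ball c r)) (hfM : ∀ w ∈ ball c r, ‖f w‖ ≤ M) :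
    ∀ i, i ≤ k → ∀ y ∈ ball c (r/2 + ((k - i : ℕ) : ℝ) * (r/(2*k))),
      ‖iteratedFDerivWithin ℂ i f (ball c r) y‖ ≤ M * (4*k/r)^i := by
  have hM0 : 0 ≤ M := le_trans (norm_nonneg _) (hfM c (mem_ball_self hr))
  have hk0 : ((k:ℝ)) ≠ 0 := Nat.cast_ne_zero.2 hk.ne'
  have hkpos : (0:ℝ) < k := Nat.cast_pos.2 hk
  set ρ : ℝ := r / (2*k) with hρdef
  have hρ : 0 < ρ := by positivity
  intro i
  induction i with
  | zero =>
    intro _ y hy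
    have hrad : r/2 + ((k - 0 : ℕ) : ℝ) * ρ = r := by
      simp only [Nat.sub_zero, hρdef]
      field_simp
      try ring
    rw [hrad] at hy
    simpa [norm_iteratedFDerivWithin_zero] using hfM y hy
  | succ i ih =>
    intro hik y hy
    have hik' : i ≤ k := Nat.le_of_succ_le hik
    have hcast1 : ((k - (i+1) : ℕ) : ℝ) = (k:ℝ) - i - 1 := by
      rw [Nat.cast_sub hik]; push_cast; ring
    have hcast2 : ((k - i : ℕ) : ℝ) = (k:ℝ) - i := by
      rw [Nat.cast_sub hik']; try push_cast; try ring
    have hki : (i:ℝ) ≤ (k:ℝ) := Nat.cast_le.2 hik'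
    have hsub1 : ball y ρ ⊆ ball c (r/2 + ((k - i : ℕ) : ℝ) * ρ) := by
      intro w hw
      rw [mem_ball] at hw hy ⊢
      rw [hcast2]
      rw [hcast1] at hy
      calc dist w c ≤ dist w y + dist y c := dist_triangle _ _ _
        _ < ρ + (r/2 + ((k:ℝ) - i - 1) * ρ) := add_lt_add hw hy
        _ = r/2 + ((k:ℝ) - i) * ρ := by ring
    have hsub2 : ball c (r/2 + ((k - i : ℕ) : ℝ) * ρ) ⊆ ball c r := by
      apply ball_subset_ball
      rw [hcast2, hρdef]
      have h1 : ((k:ℝ) - i) * (r/(2*k)) ≤ (k:ℝ) * (r/(2*k)) :=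
        mul_le_mul_of_nonneg_right (by linarith) (by positivity)
      have h2 : (k:ℝ) * (r/(2*k)) = r/2 := by field_simp
      linarith
    have hyr : y ∈ ball c r := hsub2 (hsub1 (mem_ball_self hρ))
    have hsm : ContDiffOn ℂ (i+1) f (ball c r) :=
      contDiffOn_of_differentiableOn_cplx (i+1) ℂ _ isOpen_ball f hf
    have hFd : DifferentiableOn ℂ (iteratedFDerivWithin ℂ i f (ball c r)) (ball c r) := by
      refine hsm.differentiableOn_iteratedFDerivWithin ?_ isOpen_ball.uniqueDiffOn
      exact_mod_cast Nat.lt_succ_self i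
    have hbound : ∀ w ∈ ball y ρ, ‖iteratedFDerivWithin ℂ i f (ball c r) w‖ ≤ M * (4*k/r)^i :=
      fun w hw => ih hik' w (hsub1 hw)
    have heq : ‖iteratedFDerivWithin ℂ (i+1) f (ball c r) y‖
        = ‖fderiv ℂ (iteratedFDerivWithin ℂ i f (ball c r)) y‖ := by
      rw [← norm_fderivWithin_iteratedFDerivWithin, fderivWithin_of_isOpen isOpen_ball hyr]
    rw [heq]
    have := norm_fderiv_le_of_bounded (iteratedFDerivWithin ℂ i f (ball c r)) y ρ
      (M * (4*k/r)^i) hρ (hFd.mono ((hsub1.trans hsub2))) hbound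
    refine le_trans this (le_of_eq ?_)
    rw [hρdef, pow_succ]
    field_simp
    ring


/-- **Hardy–Littlewood-type estimate.**  A function holomorphic on a bounded open set
`Ω ⊆ ℂⁿ` and Lipschitz of order `α ∈ (0,1]` with constant `C₀` has `k`-th derivatives
(`k ≥ 1`) blowing up no faster than `d(z)^{α−k}`, with a constant depending only on
`n`, `k`, `α` and `C₀`. -/
theorem holomorphic_lipschitz_deriv_bound (n k : ℕ) (hk : 1 ≤ k)
    (α : ℝ) (hα0 : 0 < α) (hα1 : α ≤ 1) (C₀ : ℝ) (hC₀ : 0 ≤ C₀) :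
    ∃ C : ℝ, ∀ Ω : Set (EuclideanSpace ℂ (Fin n)), IsOpen Ω → Bornology.IsBounded Ω →
      ∀ f : EuclideanSpace ℂ (Fin n) → ℂ, DifferentiableOn ℂ f Ω →
      (∀ z ∈ Ω, ∀ ζ ∈ Ω, ‖f z - f ζ‖ ≤ C₀ * ‖z - ζ‖ ^ α) →
      ∀ z ∈ Ω, ‖iteratedFDerivWithin ℂ k f Ω z‖ ≤ C * infDist z Ωᶜ ^ (α - (k : ℝ)) := by

  refine ⟨C₀ * (4*k)^k, ?_⟩
  intro Ω hΩ hΩb f hf hLip z hz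
  rcases subsingleton_or_nontrivial (EuclideanSpace ℂ (Fin n)) with hsub | hnt
  · have hD : iteratedFDerivWithin ℂ k f Ω z = 0 := by
      apply ContinuousMultilinearMap.ext
      intro m
      have h0 : m ⟨0, hk⟩ = 0 := Subsingleton.elim _ _
      rw [ContinuousMultilinearMap.map_coord_zero _ (⟨0, hk⟩ : Fin k) h0]
      simp
    rw [hD, norm_zero]
    exact mul_nonneg (by positivity) (Real.rpow_nonneg infDist_nonneg _)
  · have hne : Ωᶜ.Nonempty := by
      rw [Set.nonempty_compl]
      intro h
      exact NormedSpace.unbounded_univ ℂ (EuclideanSpace ℂ (Fin n)) (h ▸ hΩb)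
    set d : ℝ := infDist z Ωᶜ with hddef
    have hd : 0 < d := by
      rw [hddef, ← (hΩ.isClosed_compl).notMem_iff_infDist_pos hne]
      simpa using hz
    have hball : ball z d ⊆ Ω := ball_infDist_compl_subset
    have hiter : iteratedFDerivWithin ℂ k f Ω z = iteratedFDerivWithin ℂ k f (ball z d) z := by
      rw [← iteratedFDerivWithin_inter_open isOpen_ball (mem_ball_self hd),
        inter_eq_self_of_subset_right hball]
    set g : EuclideanSpace ℂ (Fin n) → ℂ := fun w => f w - f z with hgdef
    have hgd : DifferentiableOn ℂ g (ball z d) := (hf.mono hball).sub_const _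
    have hgb : ∀ w ∈ ball z d, ‖g w‖ ≤ C₀ * d ^ α := by
      intro w hw
      refine le_trans (hLip w (hball hw) z hz) ?_
      have hwz : ‖w - z‖ ≤ d := le_of_lt (by rwa [mem_ball, dist_eq_norm] at hw)
      exact mul_le_mul_of_nonneg_left (Real.rpow_le_rpow (norm_nonneg _) hwz hα0.le) hC₀
    have hzc : z ∈ ball z (d/2 + ((k - k : ℕ) : ℝ) * (d/(2*k))) := by
      simp only [Nat.sub_self, Nat.cast_zero, zero_mul, add_zero]
      exact mem_ball_self (by positivity)
    have hkey := iterated_cauchy_bound k hk hd hgd hgb k le_rfl z hzc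
    have hgf : iteratedFDerivWithin ℂ k f (ball z d) z
        = iteratedFDerivWithin ℂ k g (ball z d) z := by
      have hgs : ContDiffOn ℂ k g (ball z d) :=
        contDiffOn_of_differentiableOn_cplx k ℂ _ isOpen_ball g hgd
      have hfg : f = fun w => g w + f z := funext fun w => by simp [hgdef]
      rw [hfg, iteratedFDerivWithin_add_apply' (hgs _ (mem_ball_self hd)) contDiffWithinAt_const
        isOpen_ball.uniqueDiffOn (mem_ball_self hd),
        iteratedFDerivWithin_const_of_ne (by omega : k ≠ 0) (f z) (ball z d), Pi.zero_apply, add_zero]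
    rw [hiter, hgf]
    refine le_trans hkey (le_of_eq ?_)
    rw [div_pow, Real.rpow_sub hd, Real.rpow_natCast]
    field_simp
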